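/- Under the stated setting, for each k ∈ [s+1, r] one has the ideal identity J_{K_m,G̃} = (J_{K_m,G̃} ∩ A_s ∩ ⋯ ∩ A_{k−1}) + (J_{K_m,G̃} ∩ A_k), where G̃ = K_n is the complete graph on [n]. -/

import Mathlib

open MvPolynomial

/-- The first vertex (as a natural number) of the `k`-th part, i.e. `Σ_{i<k} ν i`. -/
def partStart {r : ℕ} (ν : Fin r → ℕ) (k : Fin r) : ℕ := ∑ i ∈ Finset.Iio k, ν i

/-- The natural number `j` is a vertex lying in the `k`-th part `V_k`. -/
def inPart {r : ℕ} (ν : Fin r → ℕ) (k : Fin r) (j : ℕ) : Prop :=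
  partStart ν k ≤ j ∧ j < partStart ν k + ν k

/-- The generalized binomial edge ideal `J_{K_m,G̃}` of the complete graph `G̃ = K_n`,
i.e. the ideal of all `2 × 2` minors of the generic `m × n` matrix `(x_{ij})`. -/
noncomputable def Jcomplete (K : Type) [Field K] (m n : ℕ) : Ideal (MvPolynomial (Fin m × Fin n) K) :=
  Ideal.span {p | ∃ (i j : Fin m) (k l : Fin n), i < j ∧ k < l ∧
    p = X (i, k) * X (j, l) - X (i, l) * X (j, k)}

/-- The prime ideal `A_k = (x_{uj} : u ∈ [m], j ∈ T_k)`, `T_k = ⋃_{i ≠ k} V_i`. -/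
noncomputable def Aideal (K : Type) [Field K] (m r n : ℕ) (ν : Fin r → ℕ) (k : Fin r) :
    Ideal (MvPolynomial (Fin m × Fin n) K) :=
  Ideal.span {p | ∃ (u : Fin m) (j : Fin n), ¬ inPart ν k (j : ℕ) ∧ p = X (u, j)}


lemma partStart_add_le {r : ℕ} (ν : Fin r → ℕ) {i k : Fin r} (h : i < k) :
    partStart ν i + ν i ≤ partStart ν k := by
  have hins : ν i + ∑ t ∈ Finset.Iio i, ν t = ∑ t ∈ insert i (Finset.Iio i), ν t :=
    (Finset.sum_insert (by simp)).symm
  unfold partStart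
  rw [add_comm, hins]
  apply Finset.sum_le_sum_of_subset
  intro x hx
  simp only [Finset.mem_insert, Finset.mem_Iio] at hx ⊢
  rcases hx with rfl | hx
  · exact h
  · exact hx.trans h

lemma inPart_disjoint {r : ℕ} (ν : Fin r → ℕ) {i k : Fin r} (hik : i ≠ k) {j : ℕ}
    (hk : inPart ν k j) : ¬ inPart ν i j := by
  intro hi
  obtain ⟨h1, h2⟩ := hk
  obtain ⟨h3, h4⟩ := hi
  rcases lt_or_gt_of_ne hik with h | h
  · have := partStart_add_le ν h
    omega
  · have := partStart_add_le ν h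
    omega

lemma X_mem_Aideal (K : Type) [Field K] (m r n : ℕ) (ν : Fin r → ℕ) (k : Fin r)
    (u : Fin m) (j : Fin n) (h : ¬ inPart ν k (j : ℕ)) :
    X (u, j) ∈ Aideal K m r n ν k :=
  Ideal.subset_span ⟨u, j, h, rfl⟩

lemma minor_mem_Aideal (K : Type) [Field K] (m r n : ℕ) (ν : Fin r → ℕ) (k : Fin r)
    (i j : Fin m) (a b : Fin n) (h : ¬ inPart ν k (a : ℕ) ∨ ¬ inPart ν k (b : ℕ)) :
    X (i, a) * X (j, b) - X (i, b) * X (j, a) ∈ Aideal K m r n ν k := by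
  rcases h with h | h
  · exact sub_mem (Ideal.mul_mem_right _ _ (X_mem_Aideal K m r n ν k i a h))
      (Ideal.mul_mem_left _ _ (X_mem_Aideal K m r n ν k j a h))
  · exact sub_mem (Ideal.mul_mem_left _ _ (X_mem_Aideal K m r n ν k j b h))
      (Ideal.mul_mem_right _ _ (X_mem_Aideal K m r n ν k i b h))

/-- For each `k ∈ [s+1, r]`,
`J_{K_m,G̃} = (J_{K_m,G̃} ∩ A_s ∩ ⋯ ∩ A_{k-1}) + (J_{K_m,G̃} ∩ A_k)`. -/
theorem stmt5 (K : Type) [Field K] (m r : ℕ) (hm : 2 ≤ m) (hr : 2 ≤ r)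
    (ν : Fin r → ℕ) (s : Fin r) (hmono : Monotone ν)
    (hone : ∀ i : Fin r, i < s → ν i = 1) (hs : 2 ≤ ν s)
    (n : ℕ) (hn : n = ∑ i, ν i) :
    ∀ k : Fin r, s < k →
      Jcomplete K m n =
        (Jcomplete K m n ⊓ ⨅ i ∈ Finset.Ico s k, Aideal K m r n ν i) ⊔
          (Jcomplete K m n ⊓ Aideal K m r n ν k) := by
  intro k hsk
  apply le_antisymm
  · rw [Jcomplete, Ideal.span_le]
    rintro p ⟨i, j, a, b, hij, hab, rfl⟩
    have hJ : X (i, a) * X (j, b) - X (i, b) * X (j, a) ∈ Jcomplete K m n :=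
      Ideal.subset_span ⟨i, j, a, b, hij, hab, rfl⟩
    by_cases hA : inPart ν k (a : ℕ) ∧ inPart ν k (b : ℕ)
    · apply Ideal.mem_sup_left
      refine Ideal.mem_inf.mpr ⟨hJ, ?_⟩
      rw [Ideal.mem_iInf]
      intro t
      rw [Ideal.mem_iInf]
      intro ht
      have htk : t ≠ k := (Finset.mem_Ico.mp ht).2.ne
      exact minor_mem_Aideal K m r n ν t i j a b
        (Or.inl (inPart_disjoint ν htk hA.1))
    · apply Ideal.mem_sup_right
      refine Ideal.mem_inf.mpr ⟨hJ, ?_⟩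
      apply minor_mem_Aideal
      tauto
  · exact sup_le inf_le_left inf_le_left
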